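/- Let ℋ be a complex Hilbert space and let S be an amenable (discrete) semigroup admitting an invariant mean μ on ℓ^∞(S). Let ρ : S → B(ℋ) be a map with ρ(st) = ρ(s)ρ(t) and ‖ρ(s)‖ ≤ 1 for all s, t ∈ S. Define the space of ρ-Toeplitz operators 𝒯(ρ) = {C ∈ B(ℋ) : ρ(s) C ρ(s)* = C for all s ∈ S}. Then there exists a bounded linear idempotent P : B(ℋ) → B(ℋ) with ‖P‖ ≤ 1, P ∘ P = P, and range of P equal to 𝒯(ρ). -/

import Mathlib

open scoped InnerProductSpace
open ContinuousLinearMap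

section Aux
variable {S H : Type*} [Semigroup S]
    [NormedAddCommGroup H] [InnerProductSpace ℂ H] [CompleteSpace H]

/-- The orbit map `s ↦ ρ s ∘ A ∘ (ρ s)*`. -/
noncomputable def auxT (ρ : S → H →L[ℂ] H) (A : H →L[ℂ] H) (s : S) : H →L[ℂ] H :=
  (ρ s).comp (A.comp (adjoint (ρ s)))

lemma auxT_norm (ρ : S → H →L[ℂ] H) (hρ1 : ∀ s : S, ‖ρ s‖ ≤ 1) (s : S) (A : H →L[ℂ] H) :
    ‖auxT ρ A s‖ ≤ ‖A‖ := by
  have h1 := hρ1 s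
  have h2 : ‖adjoint (ρ s)‖ ≤ 1 := by rw [LinearIsometryEquiv.norm_map adjoint]; exact h1
  calc ‖auxT ρ A s‖ ≤ ‖ρ s‖ * ‖A.comp (adjoint (ρ s))‖ := opNorm_comp_le _ _
    _ ≤ ‖ρ s‖ * (‖A‖ * ‖adjoint (ρ s)‖) := by
        gcongr; exact opNorm_comp_le _ _
    _ ≤ 1 * (‖A‖ * 1) := by gcongr
    _ = ‖A‖ := by ring

lemma auxT_apply_norm (ρ : S → H →L[ℂ] H) (hρ1 : ∀ s : S, ‖ρ s‖ ≤ 1) (s : S)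
    (A : H →L[ℂ] H) (ξ : H) : ‖auxT ρ A s ξ‖ ≤ ‖A‖ * ‖ξ‖ :=
  (auxT ρ A s).le_opNorm ξ |>.trans (by gcongr; exact auxT_norm ρ hρ1 s A)

/-- The bounded linear functional `η ↦ conj (μ (s ↦ ⟪η, (auxT ρ A s) ξ⟫))`. -/
noncomputable def auxF (μ : (S → ℂ) →ₗ[ℂ] ℂ)
    (hμbdd : ∀ (f : S → ℂ) (C : ℝ), 0 ≤ C → (∀ s, ‖f s‖ ≤ C) → ‖μ f‖ ≤ C)
    (ρ : S → H →L[ℂ] H) (hρ1 : ∀ s : S, ‖ρ s‖ ≤ 1)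
    (A : H →L[ℂ] H) (ξ : H) : H →L[ℂ] ℂ :=
  LinearMap.mkContinuous
    { toFun := fun η => starRingEnd ℂ (μ (fun s => ⟪η, auxT ρ A s ξ⟫_ℂ))
      map_add' := by
        intro x y
        have h : (fun s => ⟪x + y, auxT ρ A s ξ⟫_ℂ) =
            (fun s => ⟪x, auxT ρ A s ξ⟫_ℂ) + (fun s => ⟪y, auxT ρ A s ξ⟫_ℂ) :=
          funext fun s => by simp [inner_add_left]
        show starRingEnd ℂ (μ fun s => ⟪x + y, auxT ρ A s ξ⟫_ℂ) = _
        rw [h, map_add μ, map_add]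
      map_smul' := by
        intro c x
        have h : (fun s => ⟪c • x, auxT ρ A s ξ⟫_ℂ) =
            (starRingEnd ℂ c) • (fun s => ⟪x, auxT ρ A s ξ⟫_ℂ) :=
          funext fun s => by simp [inner_smul_left]; ring
        show starRingEnd ℂ (μ fun s => ⟪c • x, auxT ρ A s ξ⟫_ℂ) = _
        rw [h, map_smul μ]
        simp [smul_eq_mul] }
    (‖A‖ * ‖ξ‖)
    (by
      intro η
      simp only [LinearMap.coe_mk, AddHom.coe_mk, RCLike.norm_conj]
      apply le_trans (hμbdd _ (‖A‖ * ‖ξ‖ * ‖η‖) (by positivity) ?_) (le_of_eq (by ring))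
      intro s
      calc ‖⟪η, auxT ρ A s ξ⟫_ℂ‖ ≤ ‖η‖ * ‖auxT ρ A s ξ‖ := norm_inner_le_norm _ _
        _ ≤ ‖η‖ * (‖A‖ * ‖ξ‖) := by gcongr; exact auxT_apply_norm ρ hρ1 s A ξ
        _ = ‖A‖ * ‖ξ‖ * ‖η‖ := by ring)

variable (μ : (S → ℂ) →ₗ[ℂ] ℂ)
    (hμbdd : ∀ (f : S → ℂ) (C : ℝ), 0 ≤ C → (∀ s, ‖f s‖ ≤ C) → ‖μ f‖ ≤ C)
    (ρ : S → H →L[ℂ] H) (hρ1 : ∀ s : S, ‖ρ s‖ ≤ 1)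

/-- The averaged vector `P A ξ`. -/
noncomputable def auxP (A : H →L[ℂ] H) (ξ : H) : H :=
  (InnerProductSpace.toDual ℂ H).symm (auxF μ hμbdd ρ hρ1 A ξ)

lemma inner_auxP (A : H →L[ℂ] H) (ξ η : H) :
    ⟪η, auxP μ hμbdd ρ hρ1 A ξ⟫_ℂ = μ (fun s => ⟪η, auxT ρ A s ξ⟫_ℂ) := by
  have h : ⟪auxP μ hμbdd ρ hρ1 A ξ, η⟫_ℂ = auxF μ hμbdd ρ hρ1 A ξ η :=
    InnerProductSpace.toDual_symm_apply
  have h2 := congrArg (starRingEnd ℂ) h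
  rw [inner_conj_symm] at h2
  rw [h2]
  simp [auxF, LinearMap.mkContinuous_apply]

lemma auxP_norm (A : H →L[ℂ] H) (ξ : H) :
    ‖auxP μ hμbdd ρ hρ1 A ξ‖ ≤ ‖A‖ * ‖ξ‖ := by
  set v := auxP μ hμbdd ρ hρ1 A ξ with hv
  have h1 : ⟪v, v⟫_ℂ = μ (fun s => ⟪v, auxT ρ A s ξ⟫_ℂ) := inner_auxP μ hμbdd ρ hρ1 A ξ v
  have h2 : ‖μ (fun s => ⟪v, auxT ρ A s ξ⟫_ℂ)‖ ≤ ‖v‖ * (‖A‖ * ‖ξ‖) := by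
    apply hμbdd _ _ (by positivity)
    intro s
    calc ‖⟪v, auxT ρ A s ξ⟫_ℂ‖ ≤ ‖v‖ * ‖auxT ρ A s ξ‖ := norm_inner_le_norm _ _
      _ ≤ ‖v‖ * (‖A‖ * ‖ξ‖) := by gcongr; exact auxT_apply_norm ρ hρ1 s A ξ
  have h3 : ‖v‖ ^ 2 ≤ ‖v‖ * (‖A‖ * ‖ξ‖) := by
    have h4 : ‖(⟪v, v⟫_ℂ)‖ = ‖v‖ ^ 2 := by
      rw [inner_self_eq_norm_sq_to_K]; simp
    rw [← h4, h1]; exact h2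
  rcases eq_or_lt_of_le (norm_nonneg v) with h | h
  · rw [← h]; positivity
  · nlinarith [h3, h]

lemma auxP_add (A : H →L[ℂ] H) (ξ₁ ξ₂ : H) :
    auxP μ hμbdd ρ hρ1 A (ξ₁ + ξ₂) =
      auxP μ hμbdd ρ hρ1 A ξ₁ + auxP μ hμbdd ρ hρ1 A ξ₂ := by
  apply ext_inner_left ℂ
  intro v
  rw [inner_add_right, inner_auxP, inner_auxP, inner_auxP]
  have h : (fun s => ⟪v, auxT ρ A s (ξ₁ + ξ₂)⟫_ℂ) =
      (fun s => ⟪v, auxT ρ A s ξ₁⟫_ℂ) + (fun s => ⟪v, auxT ρ A s ξ₂⟫_ℂ) :=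
    funext fun s => by simp [inner_add_right]
  rw [h, map_add μ]

lemma auxP_smul (A : H →L[ℂ] H) (c : ℂ) (ξ : H) :
    auxP μ hμbdd ρ hρ1 A (c • ξ) = c • auxP μ hμbdd ρ hρ1 A ξ := by
  apply ext_inner_left ℂ
  intro v
  rw [inner_smul_right, inner_auxP, inner_auxP]
  have h : (fun s => ⟪v, auxT ρ A s (c • ξ)⟫_ℂ) =
      c • (fun s => ⟪v, auxT ρ A s ξ⟫_ℂ) :=
    funext fun s => by simp [inner_smul_right]
  rw [h, map_smul μ, smul_eq_mul]

/-- The averaging operator applied to `A`, as a continuous linear map. -/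
noncomputable def auxPA (A : H →L[ℂ] H) : H →L[ℂ] H :=
  LinearMap.mkContinuous
    { toFun := auxP μ hμbdd ρ hρ1 A
      map_add' := auxP_add μ hμbdd ρ hρ1 A
      map_smul' := auxP_smul μ hμbdd ρ hρ1 A }
    ‖A‖ (auxP_norm μ hμbdd ρ hρ1 A)

lemma inner_auxPA (A : H →L[ℂ] H) (ξ η : H) :
    ⟪η, auxPA μ hμbdd ρ hρ1 A ξ⟫_ℂ = μ (fun s => ⟪η, auxT ρ A s ξ⟫_ℂ) :=
  inner_auxP μ hμbdd ρ hρ1 A ξ η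

lemma auxPA_norm (A : H →L[ℂ] H) : ‖auxPA μ hμbdd ρ hρ1 A‖ ≤ ‖A‖ :=
  LinearMap.mkContinuous_norm_le _ (norm_nonneg A) _

end Aux

open ContinuousLinearMap in
/-- Projection onto the space of `ρ`-Toeplitz operators, for a contractive
representation `ρ` of an amenable semigroup `S` on a Hilbert space. -/
theorem stmt_5 {S H : Type*} [Semigroup S]
    [NormedAddCommGroup H] [InnerProductSpace ℂ H] [CompleteSpace H]
    (μ : (S → ℂ) →ₗ[ℂ] ℂ)
    (hμbdd : ∀ (f : S → ℂ) (C : ℝ), 0 ≤ C → (∀ s, ‖f s‖ ≤ C) → ‖μ f‖ ≤ C)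
    (hμ1 : μ (fun _ : S => (1 : ℂ)) = 1)
    (hμinv : ∀ (t : S) (f : S → ℂ), μ (fun s : S => f (t * s)) = μ f)
    (ρ : S → H →L[ℂ] H)
    (hρ : ∀ s t : S, ρ (s * t) = (ρ s).comp (ρ t))
    (hρ1 : ∀ s : S, ‖ρ s‖ ≤ 1) :
    ∃ P : (H →L[ℂ] H) →L[ℂ] (H →L[ℂ] H),
      ‖P‖ ≤ 1 ∧ P.comp P = P ∧
      Set.range ⇑P =
        {C : H →L[ℂ] H | ∀ s : S, (ρ s).comp (C.comp (adjoint (ρ s))) = C} := by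
  have hadd : ∀ A B : H →L[ℂ] H, auxPA μ hμbdd ρ hρ1 (A + B) =
      auxPA μ hμbdd ρ hρ1 A + auxPA μ hμbdd ρ hρ1 B := by
    intro A B
    ext ξ
    apply ext_inner_left ℂ
    intro v
    simp only [add_apply, inner_add_right]
    rw [inner_auxPA, inner_auxPA, inner_auxPA]
    have h : (fun s => ⟪v, auxT ρ (A + B) s ξ⟫_ℂ) =
        (fun s => ⟪v, auxT ρ A s ξ⟫_ℂ) + (fun s => ⟪v, auxT ρ B s ξ⟫_ℂ) :=
      funext fun s => by simp [auxT, inner_add_right]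
    rw [h, map_add μ]
  have hsmul : ∀ (c : ℂ) (A : H →L[ℂ] H), auxPA μ hμbdd ρ hρ1 (c • A) =
      c • auxPA μ hμbdd ρ hρ1 A := by
    intro c A
    ext ξ
    apply ext_inner_left ℂ
    intro v
    simp only [coe_smul', Pi.smul_apply, inner_smul_right]
    rw [inner_auxPA, inner_auxPA]
    have h : (fun s => ⟪v, auxT ρ (c • A) s ξ⟫_ℂ) =
        c • (fun s => ⟪v, auxT ρ A s ξ⟫_ℂ) :=
      funext fun s => by simp [auxT, inner_smul_right]
    rw [h, map_smul μ, smul_eq_mul]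
  set P : (H →L[ℂ] H) →L[ℂ] (H →L[ℂ] H) :=
    LinearMap.mkContinuous
      { toFun := auxPA μ hμbdd ρ hρ1
        map_add' := hadd
        map_smul' := hsmul }
      1 (fun A => by simpa using auxPA_norm μ hμbdd ρ hρ1 A) with hP
  have hPapp : ∀ A, P A = auxPA μ hμbdd ρ hρ1 A := fun A => rfl
  -- every `P A` is Toeplitz
  have htoep : ∀ (A : H →L[ℂ] H) (t : S),
      (ρ t).comp ((P A).comp (adjoint (ρ t))) = P A := by
    intro A t
    ext ξ
    apply ext_inner_left ℂ
    intro v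
    rw [hPapp]
    simp only [coe_comp', Function.comp_apply]
    rw [← adjoint_inner_left (ρ t), inner_auxPA, inner_auxPA]
    rw [← hμinv t (fun s => ⟪v, auxT ρ A s ξ⟫_ℂ)]
    congr 1
    funext s
    rw [adjoint_inner_left]
    congr 1
    simp [auxT, hρ t s, adjoint_comp]
  -- `P C = C` for Toeplitz `C`
  have hfix : ∀ C : H →L[ℂ] H,
      (∀ s : S, (ρ s).comp (C.comp (adjoint (ρ s))) = C) → P C = C := by
    intro C hC
    ext ξ
    apply ext_inner_left ℂ
    intro v
    rw [hPapp, inner_auxPA]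
    have h1 : (fun s : S => ⟪v, auxT ρ C s ξ⟫_ℂ) = fun _ : S => ⟪v, C ξ⟫_ℂ := by
      funext s
      have h2 := congrArg (fun T : H →L[ℂ] H => T ξ) (hC s)
      simp only [coe_comp', Function.comp_apply] at h2
      simp [auxT, h2]
    rw [h1]
    have h3 : (fun _ : S => ⟪v, C ξ⟫_ℂ) = ⟪v, C ξ⟫_ℂ • (fun _ : S => (1 : ℂ)) := by
      funext s; simp
    rw [h3, map_smul μ, hμ1, smul_eq_mul, mul_one]
  refine ⟨P, ?_, ?_, ?_⟩
  · exact LinearMap.mkContinuous_norm_le _ zero_le_one _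
  · apply ContinuousLinearMap.ext
    intro A
    simp only [comp_apply]
    exact hfix (P A) (htoep A)
  · ext C
    constructor
    · rintro ⟨A, rfl⟩
      exact htoep A
    · intro hC
      exact ⟨C, hfix C hC⟩
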